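/- Fix α > 0, b < 0, and a class v = (r, d, n) ∈ ℤ³ with r, d, n > 0. Define μ_α(r', d', n') = d'/r' + α n'/r' for r' ≠ 0, and for (b,w) on the line ℓ: w = -(1/α)(b - d/r) + n/r define ν_{b,w}(r',d',n') = (n' - w r')/(d' - b r'). Then for any (r', d', n') with r' > 0 and d' - b r' > 0: the inequality ν_{b,w}(r',d',n') < ν_{b,w}(r,d,n) for all sufficiently negative b (with w determined by ℓ) implies μ_α(r',d',n') < μ_α(r,d,n). -/

import Mathlib

/-- along the ray `ℓ_v^α` of slope `-1/α` through `Π(v) = (d/r, n/r)` in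
the `(b,w)`-plane, the tilt-slope ordering `ν_{b,w}` for `b` sufficiently negative
recovers the classical `μ_α`-slope ordering. Here `μ_α(r,d,n) = d/r + α n/r` and
`ν_{b,w}(r,d,n) = (n - wr)/(d - br)` with `w = -(1/α)(b - d/r) + n/r`. -/
theorem large_volume_limit_recovers_alpha_stability
    (α : ℝ) (hα : 0 < α)
    (r d n : ℤ) (hr : 0 < r) (hd : 0 < d) (hn : 0 < n)
    (r' d' n' : ℤ) (hr' : 0 < r')
    (hν : ∃ B : ℝ, ∀ b : ℝ, b ≤ B →
      ((d' : ℝ) - b * r' > 0) →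
      ((n' : ℝ) - (-(1 / α) * (b - (d : ℝ) / r) + (n : ℝ) / r) * r') / ((d' : ℝ) - b * r')
        < ((n : ℝ) - (-(1 / α) * (b - (d : ℝ) / r) + (n : ℝ) / r) * r) / ((d : ℝ) - b * r)) :
    (d' : ℝ) / r' + α * (n' : ℝ) / r' < (d : ℝ) / r + α * (n : ℝ) / r := by
  obtain ⟨B, hB⟩ := hν
  have hrR : (0:ℝ) < (r:ℝ) := by exact_mod_cast hr
  have hr'R : (0:ℝ) < (r':ℝ) := by exact_mod_cast hr'
  set b : ℝ := min B (min ((d':ℝ)/r' - 1) ((d:ℝ)/r - 1)) with hb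
  have hb1 : b ≤ B := min_le_left _ _
  have hb2 : b ≤ (d':ℝ)/r' - 1 := le_trans (min_le_right _ _) (min_le_left _ _)
  have hb3 : b ≤ (d:ℝ)/r - 1 := le_trans (min_le_right _ _) (min_le_right _ _)
  have hpos' : (d':ℝ) - b * r' > 0 := by
    have : b * r' ≤ ((d':ℝ)/r' - 1) * r' := by nlinarith
    have h2 : ((d':ℝ)/r' - 1) * r' = d' - r' := by field_simp
    nlinarith
  have hpos : (d:ℝ) - b * r > 0 := by
    have : b * r ≤ ((d:ℝ)/r - 1) * r := by nlinarith
    have h2 : ((d:ℝ)/r - 1) * r = d - r := by field_simp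
    nlinarith
  have h := hB b hb1 hpos'
  have hw : ((n:ℝ) - (-(1 / α) * (b - (d : ℝ) / r) + (n : ℝ) / r) * r) / ((d : ℝ) - b * r)
      = -(1/α) := by
    have : ((n:ℝ) - (-(1 / α) * (b - (d : ℝ) / r) + (n : ℝ) / r) * r) = -(1/α) * ((d:ℝ) - b*r) := by
      field_simp
      ring
    rw [this, mul_div_assoc, div_self (ne_of_gt hpos), mul_one]
  rw [hw, div_lt_iff₀ hpos'] at h
  have key : α*(n':ℝ)*r + (d':ℝ)*r - (r':ℝ)*d - α*(n:ℝ)*r' < 0 := by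
    field_simp at h
    have h : α*(n':ℝ)*r + (d':ℝ)*r - (r':ℝ)*d - α*(n:ℝ)*r' < 0 := by linarith
    have hX : α * (r:ℝ) * (α*(n':ℝ)*r + (d':ℝ)*r - (r':ℝ)*d - α*(n:ℝ)*r') < 0 := by
      exact mul_neg_of_pos_of_neg (mul_pos hα hrR) h
    nlinarith [hX, mul_pos hα hrR]
  rw [div_add_div _ _ (ne_of_gt hr'R) (ne_of_gt hr'R), div_add_div _ _ (ne_of_gt hrR) (ne_of_gt hrR),
    div_lt_div_iff₀ (by positivity) (by positivity)]
  have hα' : α ≠ 0 := ne_of_gt hα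
  nlinarith [mul_pos hrR hr'R, mul_lt_mul_of_pos_right key (mul_pos hrR hr'R)]
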